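/- Let A and B be pseudocomplemented semilattices, f : A → B a homomorphism (preserving ∧, ¬, 0, 1), F a filter of B, and G a maximal proper filter of A. If f⁻¹[F] ⊆ G, then the filter of B generated by F ∪ f[G] is disjoint from f[A ∖ G]. -/

import Mathlib

/-- A filter of a meet-semilattice: a nonempty upset closed under binary meets. -/
def IsSLFilter {A : Type*} [SemilatticeInf A] (F : Set A) : Prop :=
  F.Nonempty ∧ (∀ a b : A, a ∈ F → a ≤ b → b ∈ F) ∧
    (∀ a b : A, a ∈ F → b ∈ F → a ⊓ b ∈ F)

/-- The filter generated by a set: all elements above a finite meet of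
elements of the set. -/
def filterGen {A : Type*} [SemilatticeInf A] (X : Set A) : Set A :=
  {b | ∃ s : Finset A, ∃ hs : s.Nonempty, ↑s ⊆ X ∧ s.inf' hs id ≤ b}

lemma top_mem_of_filter {A : Type*} [SemilatticeInf A] [OrderTop A] {F : Set A}
    (hF : IsSLFilter F) : (⊤ : A) ∈ F := by
  obtain ⟨⟨a, ha⟩, hup, _⟩ := hF
  exact hup a ⊤ ha le_top

lemma gen_decomp {A B : Type*} [SemilatticeInf A] [OrderTop A]
    [SemilatticeInf B] [OrderTop B]
    (f : A → B) (hfinf : ∀ a b : A, f (a ⊓ b) = f a ⊓ f b) (hftop : f ⊤ = ⊤)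
    (F : Set B) (hF : IsSLFilter F) (G : Set A) (hG : IsSLFilter G)
    {b : B} (hb : b ∈ filterGen (F ∪ f '' G)) :
    ∃ x ∈ F, ∃ g ∈ G, x ⊓ f g ≤ b := by
  obtain ⟨s, hs, hsub, hle⟩ := hb
  suffices h : ∃ x ∈ F, ∃ g ∈ G, x ⊓ f g ≤ s.inf' hs id by
    obtain ⟨x, hx, g, hg, hxg⟩ := h
    exact ⟨x, hx, g, hg, hxg.trans hle⟩
  clear hle
  induction hs using Finset.Nonempty.cons_induction with
  | singleton a =>
    have haU : a ∈ F ∪ f '' G := hsub (by simp)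
    rcases haU with ha | ⟨g, hg, hfg⟩
    · exact ⟨a, ha, ⊤, top_mem_of_filter hG, by simp [hftop]⟩
    · exact ⟨⊤, top_mem_of_filter hF, g, hg, by simp [hfg]⟩
  | cons a s ha hs ih =>
    have hsub' : (↑s : Set B) ⊆ F ∪ f '' G := fun y hy => hsub (by simp [hy])
    obtain ⟨x₂, hx₂, g₂, hg₂, h₂⟩ := ih hsub'
    have haU : a ∈ F ∪ f '' G := hsub (by simp)
    rw [Finset.inf'_cons hs]
    rcases haU with haF | ⟨g₁, hg₁, rfl⟩
    · refine ⟨a ⊓ x₂, hF.2.2 _ _ haF hx₂, g₂, hg₂, ?_⟩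
      calc a ⊓ x₂ ⊓ f g₂ = a ⊓ (x₂ ⊓ f g₂) := inf_assoc ..
        _ ≤ a ⊓ s.inf' hs id := inf_le_inf_left _ h₂
    · refine ⟨x₂, hx₂, g₁ ⊓ g₂, hG.2.2 _ _ hg₁ hg₂, ?_⟩
      rw [hfinf]
      refine le_inf ?_ ?_
      · exact le_trans inf_le_right inf_le_left
      · refine le_trans ?_ h₂
        exact le_inf inf_le_left (le_trans inf_le_right inf_le_right)

lemma pcomp_mem_of_not_mem {A : Type*} [SemilatticeInf A] [BoundedOrder A]
    (pcompA : A → A) (hresA : ∀ c a : A, c ⊓ a = ⊥ ↔ c ≤ pcompA a)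
    (G : Set A) (hG : IsSLFilter G) (hGproper : G ≠ Set.univ)
    (hGmax : ∀ G' : Set A, IsSLFilter G' → G' ≠ Set.univ → G ⊆ G' → G = G')
    {a : A} (ha : a ∉ G) : pcompA a ∈ G := by
  set G' : Set A := {b | ∃ g ∈ G, g ⊓ a ≤ b} with hG'def
  have hG' : IsSLFilter G' := by
    refine ⟨⟨a, ⊤, top_mem_of_filter hG, inf_le_right⟩, ?_, ?_⟩
    · rintro b c ⟨g, hg, hgb⟩ hbc
      exact ⟨g, hg, hgb.trans hbc⟩
    · rintro b c ⟨g₁, hg₁, h₁⟩ ⟨g₂, hg₂, h₂⟩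
      refine ⟨g₁ ⊓ g₂, hG.2.2 _ _ hg₁ hg₂, le_inf ?_ ?_⟩
      · exact le_trans (inf_le_inf_right _ inf_le_left) h₁
      · exact le_trans (inf_le_inf_right _ inf_le_right) h₂
  have hGsub : G ⊆ G' := fun g hg => ⟨g, hg, inf_le_left⟩
  have haG' : a ∈ G' := ⟨⊤, top_mem_of_filter hG, inf_le_right⟩
  have hne : G' = Set.univ := by
    by_contra hne
    exact ha ((hGmax G' hG' hne hGsub) ▸ haG')
  have hbot : (⊥ : A) ∈ G' := hne ▸ Set.mem_univ _
  obtain ⟨g, hg, hgle⟩ := hbot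
  have : g ⊓ a = ⊥ := le_bot_iff.mp hgle
  exact hG.2.1 g _ hg ((hresA g a).mp this)

/-- Let `A`, `B` be pseudocomplemented semilattices and
`f : A → B` a homomorphism (preserving `⊓`, `¬`, `0`, `1`), `F` a filter of
`B`, and `G` a maximal proper filter of `A`. If `f⁻¹[F] ⊆ G`, then the filter
of `B` generated by `F ∪ f[G]` is disjoint from `f[A ∖ G]`. -/
theorem stmt9 {A B : Type*} [SemilatticeInf A] [BoundedOrder A]
    [SemilatticeInf B] [BoundedOrder B]
    (pcompA : A → A) (hresA : ∀ c a : A, c ⊓ a = ⊥ ↔ c ≤ pcompA a)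
    (pcompB : B → B) (hresB : ∀ c a : B, c ⊓ a = ⊥ ↔ c ≤ pcompB a)
    (f : A → B)
    (hfinf : ∀ a b : A, f (a ⊓ b) = f a ⊓ f b)
    (hfneg : ∀ a : A, f (pcompA a) = pcompB (f a))
    (hfbot : f ⊥ = ⊥) (hftop : f ⊤ = ⊤)
    (F : Set B) (hF : IsSLFilter F)
    (G : Set A) (hG : IsSLFilter G) (hGproper : G ≠ Set.univ)
    (hGmax : ∀ G' : Set A, IsSLFilter G' → G' ≠ Set.univ → G ⊆ G' → G = G')
    (h1 : f ⁻¹' F ⊆ G) :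
    Disjoint (filterGen (F ∪ f '' G)) (f '' Gᶜ) := by
  rw [Set.disjoint_left]
  rintro b hb ⟨a, ha, rfl⟩
  obtain ⟨x, hx, g, hg, hxg⟩ := gen_decomp f hfinf hftop F hF G hG hb
  have hna : pcompA a ∈ G := pcomp_mem_of_not_mem pcompA hresA G hG hGproper hGmax ha
  set c : A := g ⊓ pcompA a with hc
  have hcG : c ∈ G := hG.2.2 _ _ hg hna
  have hbotB : x ⊓ f c = ⊥ := by
    have hpa : f a ⊓ pcompB (f a) = ⊥ := by
      rw [inf_comm]; exact (hresB _ _).mpr le_rfl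
    refine le_bot_iff.mp ?_
    rw [hc, hfinf, hfneg, ← hpa, ← inf_assoc]
    exact inf_le_inf hxg le_rfl
  have hxle : x ≤ f (pcompA c) := by
    rw [hfneg]
    exact (hresB x (f c)).mp hbotB
  have hfc : f (pcompA c) ∈ F := hF.2.1 _ _ hx hxle
  have hpcG : pcompA c ∈ G := h1 hfc
  have hbotA : (⊥ : A) ∈ G := by
    have : pcompA c ⊓ c = ⊥ := (hresA _ _).mpr le_rfl
    exact this ▸ hG.2.2 _ _ hpcG hcG
  exact hGproper (Set.eq_univ_of_forall fun y => hG.2.1 ⊥ y hbotA bot_le)
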